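/- arXiv:2403.16162 — 4 statements merged into one kernel-verified Lean document; each statement's English description precedes it below -/
import Mathlib

section
/- Let M ∈ ℝ^{n×n} be symmetric stochastic and let B ∈ ℝ^{n×n} be any symmetric matrix. Denote by λ₁(A) ≥ λ₂(A) ≥ … ≥ λ_n(A) the eigenvalues of a symmetric matrix A in decreasing order. Then λ_k(M + B) ≤ λ_k(I + B) for every k = 1, …, n. -/
/-- The eigenvalues of a real symmetric (Hermitian) matrix listed in decreasing order:
`eigDesc hA 0 = λ₁ ≥ eigDesc hA 1 = λ₂ ≥ …`. -/
noncomputable def eigDesc {n : ℕ} {A : Matrix (Fin n) (Fin n) ℝ}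
    (hA : A.IsHermitian) (k : Fin n) : ℝ :=
  (hA.eigenvalues ∘ Tuple.sort hA.eigenvalues) k.rev


section Aux
open Matrix Finset Submodule
open Matrix Finset Submodule

variable {n : ℕ}

lemma sum_dot {ι : Type*} (s : Finset ι) (f : ι → Fin n → ℝ) (y : Fin n → ℝ) :
    (∑ i ∈ s, f i) ⬝ᵥ y = ∑ i ∈ s, f i ⬝ᵥ y := by
  simp only [dotProduct, Finset.sum_apply, Finset.sum_mul]
  exact Finset.sum_comm

lemma dot_sum {ι : Type*} (s : Finset ι) (y : Fin n → ℝ) (f : ι → Fin n → ℝ) :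
    y ⬝ᵥ (∑ i ∈ s, f i) = ∑ i ∈ s, y ⬝ᵥ f i := by
  simp only [dotProduct, Finset.sum_apply, Finset.mul_sum]
  exact Finset.sum_comm

lemma mulVec_sum' {ι : Type*} (s : Finset ι) (A : Matrix (Fin n) (Fin n) ℝ)
    (f : ι → Fin n → ℝ) : A *ᵥ (∑ i ∈ s, f i) = ∑ i ∈ s, A *ᵥ f i := by
  simpa only [Matrix.mulVecLin_apply] using map_sum A.mulVecLin f s

lemma dot_eigBasis {A : Matrix (Fin n) (Fin n) ℝ} (hA : A.IsHermitian) (i j : Fin n) :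
    ⇑(hA.eigenvectorBasis i) ⬝ᵥ ⇑(hA.eigenvectorBasis j) = if i = j then 1 else 0 := by
  have h := orthonormal_iff_ite.mp hA.eigenvectorBasis.orthonormal i j
  simpa [EuclideanSpace.inner_eq_star_dotProduct, dotProduct, mul_comm] using h

lemma dot_self_repr {A : Matrix (Fin n) (Fin n) ℝ} (hA : A.IsHermitian)
    (s : Finset (Fin n)) (c : s → ℝ) :
    (∑ i : s, c i • ⇑(hA.eigenvectorBasis i)) ⬝ᵥ (∑ i : s, c i • ⇑(hA.eigenvectorBasis i))
      = ∑ i : s, (c i)^2 := by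
  rw [sum_dot, Finset.sum_congr rfl (fun j _ => by rw [dot_sum])]
  simp only [smul_dotProduct, dotProduct_smul, dot_eigBasis, smul_eq_mul]
  refine Finset.sum_congr rfl (fun i _ => ?_)
  rw [Finset.sum_eq_single i]
  · simp [pow_two]
  · intro j _ hj
    have hne : (j : Fin n) ≠ (i : Fin n) := fun h => hj (Subtype.ext h)
    simp [hne, hne.symm]
  · simp

lemma dot_mulVec_repr {A : Matrix (Fin n) (Fin n) ℝ} (hA : A.IsHermitian)
    (s : Finset (Fin n)) (c : s → ℝ) :
    (∑ i : s, c i • ⇑(hA.eigenvectorBasis i)) ⬝ᵥ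
      (A *ᵥ (∑ i : s, c i • ⇑(hA.eigenvectorBasis i)))
      = ∑ i : s, hA.eigenvalues i * (c i)^2 := by
  have hAv : A *ᵥ (∑ i : s, c i • ⇑(hA.eigenvectorBasis i))
      = ∑ i : s, (hA.eigenvalues i * c i) • ⇑(hA.eigenvectorBasis i) := by
    rw [mulVec_sum']
    refine Finset.sum_congr rfl (fun i _ => ?_)
    rw [mulVec_smul, hA.mulVec_eigenvectorBasis, smul_smul, mul_comm]
  rw [hAv, sum_dot, Finset.sum_congr rfl (fun j _ => by rw [dot_sum])]
  simp only [smul_dotProduct, dotProduct_smul, dot_eigBasis, smul_eq_mul]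
  refine Finset.sum_congr rfl (fun i _ => ?_)
  rw [Finset.sum_eq_single i]
  · simp; ring
  · intro j _ hj
    have hne : (j : Fin n) ≠ (i : Fin n) := fun h => hj (Subtype.ext h)
    simp [hne, hne.symm]
  · simp

lemma linIndep_eigBasis {A : Matrix (Fin n) (Fin n) ℝ} (hA : A.IsHermitian)
    (s : Finset (Fin n)) :
    LinearIndependent ℝ (fun i : s => ⇑(hA.eigenvectorBasis i)) := by
  rw [Fintype.linearIndependent_iff]
  intro g hg j
  have h := congrArg (· ⬝ᵥ ⇑(hA.eigenvectorBasis j)) hg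
  simp only [sum_dot, smul_dotProduct, dot_eigBasis, smul_eq_mul, zero_dotProduct] at h
  rw [Finset.sum_eq_single j] at h
  · simpa using h
  · intro i _ hi
    have hne : (i : Fin n) ≠ (j : Fin n) := fun h => hi (Subtype.ext h)
    simp [hne]
  · simp

lemma finrank_span_eig {A : Matrix (Fin n) (Fin n) ℝ} (hA : A.IsHermitian)
    (s : Finset (Fin n)) :
    Module.finrank ℝ (span ℝ (Set.range fun i : s => ⇑(hA.eigenvectorBasis i))) = s.card := by
  rw [finrank_span_eq_card (linIndep_eigBasis hA s), Fintype.card_coe]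

lemma rayleigh_lower {A : Matrix (Fin n) (Fin n) ℝ} (hA : A.IsHermitian)
    (s : Finset (Fin n)) (r : ℝ) (hr : ∀ i ∈ s, r ≤ hA.eigenvalues i) {x : Fin n → ℝ}
    (hx : x ∈ span ℝ (Set.range fun i : s => ⇑(hA.eigenvectorBasis i))) :
    r * (x ⬝ᵥ x) ≤ x ⬝ᵥ (A *ᵥ x) := by
  obtain ⟨c, rfl⟩ := (mem_span_range_iff_exists_fun ℝ).mp hx
  rw [dot_self_repr, dot_mulVec_repr, Finset.mul_sum]
  refine Finset.sum_le_sum (fun i _ => ?_)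
  exact mul_le_mul_of_nonneg_right (hr i i.2) (sq_nonneg _)

lemma rayleigh_upper {A : Matrix (Fin n) (Fin n) ℝ} (hA : A.IsHermitian)
    (s : Finset (Fin n)) (r : ℝ) (hr : ∀ i ∈ s, hA.eigenvalues i ≤ r) {x : Fin n → ℝ}
    (hx : x ∈ span ℝ (Set.range fun i : s => ⇑(hA.eigenvectorBasis i))) :
    x ⬝ᵥ (A *ᵥ x) ≤ r * (x ⬝ᵥ x) := by
  obtain ⟨c, rfl⟩ := (mem_span_range_iff_exists_fun ℝ).mp hx
  rw [dot_self_repr, dot_mulVec_repr, Finset.mul_sum]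
  refine Finset.sum_le_sum (fun i _ => ?_)
  exact mul_le_mul_of_nonneg_right (hr i i.2) (sq_nonneg _)


lemma dot_self_pos {x : Fin n → ℝ} (hx : x ≠ 0) : 0 < x ⬝ᵥ x := by
  obtain ⟨i, hi⟩ := Function.ne_iff.mp hx
  exact Finset.sum_pos' (fun j _ => mul_self_nonneg (x j))
    ⟨i, Finset.mem_univ i, mul_self_pos.mpr hi⟩

theorem eigDesc_mono {A C : Matrix (Fin n) (Fin n) ℝ} (hA : A.IsHermitian) (hC : C.IsHermitian)
    (h : ∀ x : Fin n → ℝ, x ⬝ᵥ (A *ᵥ x) ≤ x ⬝ᵥ (C *ᵥ x)) (k : Fin n) :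
    eigDesc hA k ≤ eigDesc hC k := by
  set σA := Tuple.sort hA.eigenvalues with hσA
  set σC := Tuple.sort hC.eigenvalues with hσC
  set sA : Finset (Fin n) := (Finset.Ici k.rev).image σA with hsA
  set sC : Finset (Fin n) := (Finset.Iic k.rev).image σC with hsC
  set V := span ℝ (Set.range fun i : sA => ⇑(hA.eigenvectorBasis i)) with hV
  set W := span ℝ (Set.range fun i : sC => ⇑(hC.eigenvectorBasis i)) with hW
  have cardA : sA.card = n - k.rev.val := by
    rw [hsA, Finset.card_image_of_injective _ σA.injective, Fin.card_Ici]
  have cardC : sC.card = k.rev.val + 1 := by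
    rw [hsC, Finset.card_image_of_injective _ σC.injective, Fin.card_Iic]
  have hVW : V ⊓ W ≠ ⊥ := by
    intro hbot
    have h1 := Submodule.finrank_sup_add_finrank_inf_eq V W
    rw [hbot, finrank_bot, add_zero] at h1
    have h2 : Module.finrank ℝ ↥(V ⊔ W) ≤ n := by
      simpa [Module.finrank_fin_fun] using Submodule.finrank_le (V ⊔ W)
    have fV : Module.finrank ℝ V = sA.card := finrank_span_eig hA sA
    have fW : Module.finrank ℝ W = sC.card := finrank_span_eig hC sC
    rw [fV, fW, cardA, cardC] at h1
    have := k.rev.isLt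
    omega
  obtain ⟨x, hxmem, hx0⟩ := Submodule.exists_mem_ne_zero_of_ne_bot hVW
  have hxx : 0 < x ⬝ᵥ x := dot_self_pos hx0
  have h1 : eigDesc hA k * (x ⬝ᵥ x) ≤ x ⬝ᵥ (A *ᵥ x) := by
    refine rayleigh_lower hA sA _ (fun j hj => ?_) hxmem.1
    obtain ⟨i, hi, rfl⟩ := Finset.mem_image.mp hj
    exact Tuple.monotone_sort hA.eigenvalues (Finset.mem_Ici.mp hi)
  have h2 : x ⬝ᵥ (C *ᵥ x) ≤ eigDesc hC k * (x ⬝ᵥ x) := by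
    refine rayleigh_upper hC sC _ (fun j hj => ?_) hxmem.2
    obtain ⟨i, hi, rfl⟩ := Finset.mem_image.mp hj
    exact Tuple.monotone_sort hC.eigenvalues (Finset.mem_Iic.mp hi)
  exact le_of_mul_le_mul_right (h1.trans ((h x).trans h2)) hxx

lemma stochastic_quad {M : Matrix (Fin n) (Fin n) ℝ} (hM : M.IsHermitian)
    (hnonneg : ∀ i j, 0 ≤ M i j) (hrow : ∀ i, ∑ j, M i j = 1) (x : Fin n → ℝ) :
    x ⬝ᵥ (M *ᵥ x) ≤ x ⬝ᵥ x := by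
  have hsym : ∀ i j, M j i = M i j := fun i j => by
    conv_lhs => rw [← hM]
    simp [conjTranspose_apply]
  have hcol : ∀ j, ∑ i, M i j = 1 := fun j => by
    rw [Finset.sum_congr rfl (fun i _ => hsym j i)]
    exact hrow j
  have key : 0 ≤ ∑ i, ∑ j, M i j * (x i - x j)^2 :=
    Finset.sum_nonneg fun i _ => Finset.sum_nonneg fun j _ =>
      mul_nonneg (hnonneg i j) (sq_nonneg _)
  have t1 : ∑ i, ∑ j, M i j * (x i)^2 = x ⬝ᵥ x := by
    rw [Finset.sum_congr rfl (fun i (_ : i ∈ Finset.univ) => by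
      rw [← Finset.sum_mul, hrow i, one_mul])]
    simp [dotProduct, pow_two]
  have t2 : ∑ i, ∑ j, M i j * (x j)^2 = x ⬝ᵥ x := by
    rw [Finset.sum_comm]
    rw [Finset.sum_congr rfl (fun j (_ : j ∈ Finset.univ) => by
      rw [← Finset.sum_mul, hcol j, one_mul])]
    simp [dotProduct, pow_two]
  have t3 : ∑ i, x i * ∑ j, M i j * x j = x ⬝ᵥ (M *ᵥ x) := by
    simp [dotProduct, mulVec]
  have expand : ∑ i, ∑ j, M i j * (x i - x j)^2
      = (x ⬝ᵥ x) + (x ⬝ᵥ x) - 2 * (x ⬝ᵥ (M *ᵥ x)) := by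
    have e1 : ∀ i j : Fin n, M i j * (x i - x j)^2
        = (M i j * (x i)^2 + M i j * (x j)^2) - 2*(x i * (M i j * x j)) := by
      intros; ring
    simp_rw [e1, Finset.sum_sub_distrib, Finset.sum_add_distrib, ← Finset.mul_sum]
    rw [t1, t2, t3]
  linarith [key, expand]

end Aux

/-- If `M` is symmetric stochastic and `B` is any symmetric matrix, then for
the eigenvalues listed in decreasing order, `λ_k(M + B) ≤ λ_k(I + B)` for every `k`. -/
theorem eigDesc_add_stochastic_le_eigDesc_add_one
    {n : ℕ} (M B : Matrix (Fin n) (Fin n) ℝ)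
    (hM : M.IsHermitian) (hnonneg : ∀ i j, 0 ≤ M i j) (hrow : ∀ i, ∑ j, M i j = 1)
    (hB : B.IsHermitian) :
    ∀ k : Fin n, eigDesc (hM.add hB) k ≤ eigDesc (Matrix.isHermitian_one.add hB) k := by
  intro k
  refine eigDesc_mono (hM.add hB) (Matrix.isHermitian_one.add hB) (fun x => ?_) k
  simp only [Matrix.add_mulVec, dotProduct_add, Matrix.one_mulVec]
  have := stochastic_quad hM hnonneg hrow x
  linarith
end

section
/- Let A, Δ ∈ ℝ^{n×n} be symmetric with Δ positive semidefinite. If there is no nonzero vector x ∈ ℝ^n satisfying both Ax = λmax(A)·x and Δx = 0, then λmax(A − Δ) < λmax(A). -/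
open Matrix


/-- The largest eigenvalue `λmax` of a real symmetric (Hermitian) matrix. -/
noncomputable def eigMax {m : Type*} [Fintype m] [DecidableEq m]
    {A : Matrix m m ℝ} (hA : A.IsHermitian) : ℝ :=
  ⨆ i, hA.eigenvalues i

private lemma symm_dot {n : ℕ} {A : Matrix (Fin n) (Fin n) ℝ} (hA : A.IsHermitian)
    (u v : Fin n → ℝ) : u ⬝ᵥ A.mulVec v = (A.mulVec u) ⬝ᵥ v := by
  rw [Matrix.dotProduct_mulVec]
  congr 1
  have ht : A.transpose = A := by
    have := hA
    rwa [Matrix.IsHermitian, Matrix.conjTranspose_eq_transpose_of_trivial] at this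
  rw [← ht, Matrix.vecMul_transpose, ht]

private lemma rayleigh_le {n : ℕ} {A : Matrix (Fin n) (Fin n) ℝ} (hA : A.IsHermitian)
    (x : Fin n → ℝ) :
    x ⬝ᵥ A.mulVec x ≤ (⨆ i, hA.eigenvalues i) * (x ⬝ᵥ x) := by
  classical
  set M := ⨆ i, hA.eigenvalues i with hM
  set B := hA.eigenvectorBasis with hB
  set y : EuclideanSpace ℝ (Fin n) := WithLp.toLp 2 x with hy
  set z : EuclideanSpace ℝ (Fin n) := WithLp.toLp 2 (A.mulVec x) with hz
  have inner_dot : ∀ u v : EuclideanSpace ℝ (Fin n),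
      (inner ℝ u v : ℝ) = (WithLp.equiv 2 _ u) ⬝ᵥ (WithLp.equiv 2 _ v) := by
    intro u v
    simp [PiLp.inner_apply, RCLike.inner_apply, dotProduct, mul_comm]
  have hpars := B.sum_inner_mul_inner y z
  have hterm : ∀ i, (inner ℝ y (B i) : ℝ) * (inner ℝ (B i) z : ℝ)
      = hA.eigenvalues i * (⇑(B i) ⬝ᵥ x)^2 := by
    intro i
    have h1 : (inner ℝ (B i) z : ℝ) = hA.eigenvalues i * (⇑(B i) ⬝ᵥ x) := by
      rw [inner_dot]
      show ⇑(B i) ⬝ᵥ A.mulVec x = _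
      rw [symm_dot hA, hA.mulVec_eigenvectorBasis, smul_dotProduct]
      rfl
    have h2 : (inner ℝ y (B i) : ℝ) = (⇑(B i) ⬝ᵥ x) := by
      rw [inner_dot]
      exact dotProduct_comm _ _
    rw [h1, h2]; ring
  have hsum : x ⬝ᵥ A.mulVec x = ∑ i, hA.eigenvalues i * (⇑(B i) ⬝ᵥ x)^2 := by
    have h0 : (inner ℝ y z : ℝ) = x ⬝ᵥ A.mulVec x := inner_dot y z
    rw [← h0, ← hpars]
    exact Finset.sum_congr rfl fun i _ => hterm i
  have hxx : x ⬝ᵥ x = ∑ i, (⇑(B i) ⬝ᵥ x)^2 := by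
    have h0 : (inner ℝ y y : ℝ) = x ⬝ᵥ x := inner_dot y y
    have := B.sum_inner_mul_inner y y
    rw [h0] at this
    rw [← this]
    refine Finset.sum_congr rfl fun i _ => ?_
    rw [inner_dot, inner_dot]
    show x ⬝ᵥ (B i).ofLp * ((B i).ofLp ⬝ᵥ x) = _
    rw [dotProduct_comm x]
    ring
  rw [hsum, hxx, Finset.mul_sum]
  refine Finset.sum_le_sum fun i _ => ?_
  have hle : hA.eigenvalues i ≤ M :=
    le_ciSup (Set.finite_range _).bddAbove i
  exact mul_le_mul_of_nonneg_right hle (sq_nonneg _)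

/-- Let `A, Δ` be symmetric matrices with `Δ` positive semidefinite. If there
is no nonzero vector `x` satisfying both `Ax = λmax(A)·x` and `Δx = 0`, then
`λmax(A − Δ) < λmax(A)`. -/
theorem eigMax_sub_posSemidef_lt
    {n : ℕ} (hn : 0 < n) (A Δ : Matrix (Fin n) (Fin n) ℝ)
    (hA : A.IsHermitian) (hΔ : Δ.PosSemidef)
    (hno : ¬ ∃ x : Fin n → ℝ, x ≠ 0 ∧ A.mulVec x = eigMax hA • x ∧ Δ.mulVec x = 0) :
    eigMax (hA.sub hΔ.1) < eigMax hA := by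
  classical
  have : Nonempty (Fin n) := ⟨⟨0, hn⟩⟩
  set hS := hA.sub hΔ.1 with hhS
  set μ := eigMax hS with hμ
  set lam := eigMax hA with hlam
  -- the sup is attained
  obtain ⟨j, hj⟩ := Finite.exists_max hS.eigenvalues
  have hμj : μ = hS.eigenvalues j := by
    refine le_antisymm (ciSup_le hj) (le_ciSup (Set.finite_range _).bddAbove j)
  set x : Fin n → ℝ := ⇑(hS.eigenvectorBasis j) with hx
  have heig : (A - Δ).mulVec x = hS.eigenvalues j • x := hS.mulVec_eigenvectorBasis j
  have hxx1 : x ⬝ᵥ x = 1 := by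
    have h := (orthonormal_iff_ite.mp hS.eigenvectorBasis.orthonormal) j j
    simp only [if_true, eq_self_iff_true] at h
    have h2 : (inner ℝ (hS.eigenvectorBasis j) (hS.eigenvectorBasis j) : ℝ) = x ⬝ᵥ x := by
      simp only [PiLp.inner_apply, RCLike.inner_apply, dotProduct, hx, conj_trivial, mul_comm]
    exact h2 ▸ h
  have hxne : x ≠ 0 := by
    intro h
    rw [h] at hxx1
    simp [dotProduct] at hxx1
  -- quadratic form value
  have hq : x ⬝ᵥ (A - Δ).mulVec x = μ := by
    rw [heig, dotProduct_smul, hxx1, hμj]; simp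
  have hsplit : x ⬝ᵥ (A - Δ).mulVec x = x ⬝ᵥ A.mulVec x - x ⬝ᵥ Δ.mulVec x := by
    rw [Matrix.sub_mulVec, dotProduct_sub]
  have hΔnn : 0 ≤ x ⬝ᵥ Δ.mulVec x := by
    have := hΔ.dotProduct_mulVec_nonneg x
    simpa using this
  have hray : x ⬝ᵥ A.mulVec x ≤ lam := by
    have := rayleigh_le hA x
    rwa [hxx1, mul_one] at this
  have hle : μ ≤ lam := by
    rw [← hq, hsplit]
    linarith
  rcases lt_or_eq_of_le hle with h | h
  · exact h
  -- equality case: derive contradiction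
  exfalso
  have hΔ0 : x ⬝ᵥ Δ.mulVec x = 0 := by
    have : μ = x ⬝ᵥ A.mulVec x - x ⬝ᵥ Δ.mulVec x := by rw [← hq, hsplit]
    linarith [hray, this, h.ge]
  have hΔx : Δ.mulVec x = 0 := by
    have := (hΔ.dotProduct_mulVec_zero_iff x).mp (by simpa using hΔ0)
    exact this
  have hAx : A.mulVec x = lam • x := by
    have : A.mulVec x = (A - Δ).mulVec x + Δ.mulVec x := by
      rw [Matrix.sub_mulVec]; abel
    rw [this, hΔx, heig, ← hμj, h]
    simp
  exact hno ⟨x, hxne, hAx, hΔx⟩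
end

section
/- Let M ∈ ℝ^{n×n} be symmetric stochastic with every diagonal entry M_{ii} ≥ 1/2, let H ∈ ℝ^{n×n} be symmetric with ξI ≤ H ≤ LI for reals 0 < ξ ≤ L, and let the step size satisfy 0 < α < 1/(2L). Then the spectral radius of M − αH equals its largest eigenvalue, ρ(M − αH) = λmax(M − αH), and moreover ρ(M − αH) ≤ 1 − αξ < 1. -/
open Matrix

/-- The spectral radius `ρ(A) = max {|λ| : λ eigenvalue of A}` of a real symmetric
(Hermitian) matrix. -/
noncomputable def specRad {m : Type*} [Fintype m] [DecidableEq m]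
    {A : Matrix m m ℝ} (hA : A.IsHermitian) : ℝ :=
  ⨆ i, |hA.eigenvalues i|

section aux

/-- Symmetry of the quadratic form of a real symmetric matrix. -/
lemma aux_dot_symm {n : ℕ} (A : Matrix (Fin n) (Fin n) ℝ) (hA : A.IsHermitian)
    (x y : Fin n → ℝ) : x ⬝ᵥ A.mulVec y = y ⬝ᵥ A.mulVec x := by
  have hsym : ∀ i j, A j i = A i j := fun i j => by
    simpa [Matrix.conjTranspose_apply] using (congrFun (congrFun hA j) i).symm
  simp only [dotProduct, mulVec, Finset.mul_sum]
  rw [Finset.sum_comm]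
  exact Finset.sum_congr rfl fun i _ => Finset.sum_congr rfl fun j _ => by
    rw [hsym i j]; ring

/-- Quadratic-form expansion in the eigenbasis. -/
lemma aux_quad_eigen {n : ℕ} (A : Matrix (Fin n) (Fin n) ℝ) (hA : A.IsHermitian)
    (u : Fin n → ℝ) :
    u ⬝ᵥ A.mulVec u = ∑ i, hA.eigenvalues i * (u ⬝ᵥ ⇑(hA.eigenvectorBasis i))^2 := by
  have key : ∑ i, (u ⬝ᵥ ⇑(hA.eigenvectorBasis i)) * (⇑(hA.eigenvectorBasis i) ⬝ᵥ A.mulVec u)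
      = u ⬝ᵥ A.mulVec u :=
    by simpa only [EuclideanSpace.inner_eq_star_dotProduct, star_trivial, WithLp.ofLp_toLp,
      dotProduct_comm] using hA.eigenvectorBasis.sum_inner_mul_inner (WithLp.toLp 2 u) (WithLp.toLp 2 (A.mulVec u))
  calc u ⬝ᵥ A.mulVec u
      = ∑ i, (u ⬝ᵥ ⇑(hA.eigenvectorBasis i)) * ((⇑(hA.eigenvectorBasis i)) ⬝ᵥ A.mulVec u) :=
        key.symm
    _ = ∑ i, hA.eigenvalues i * (u ⬝ᵥ ⇑(hA.eigenvectorBasis i))^2 := by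
        refine Finset.sum_congr rfl fun i _ => ?_
        rw [aux_dot_symm A hA _ u, hA.mulVec_eigenvectorBasis, dotProduct_smul]
        simp only [smul_eq_mul, sq]
        ring

/-- Parseval for dot products. -/
lemma aux_parseval {n : ℕ} {A : Matrix (Fin n) (Fin n) ℝ} (hA : A.IsHermitian)
    (u : Fin n → ℝ) : u ⬝ᵥ u = ∑ i, (u ⬝ᵥ ⇑(hA.eigenvectorBasis i))^2 := by
  have key : ∑ i, (u ⬝ᵥ ⇑(hA.eigenvectorBasis i)) * (⇑(hA.eigenvectorBasis i) ⬝ᵥ u)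
      = u ⬝ᵥ u :=
    by simpa only [EuclideanSpace.inner_eq_star_dotProduct, star_trivial, WithLp.ofLp_toLp,
      dotProduct_comm] using hA.eigenvectorBasis.sum_inner_mul_inner (WithLp.toLp 2 u) (WithLp.toLp 2 u)
  rw [← key]
  exact Finset.sum_congr rfl fun i _ => by rw [dotProduct_comm u, sq]

/-- Eigenvectors have unit dot product with themselves. -/
lemma aux_unit {n : ℕ} {A : Matrix (Fin n) (Fin n) ℝ} (hA : A.IsHermitian) (i : Fin n) :
    (⇑(hA.eigenvectorBasis i)) ⬝ᵥ (⇑(hA.eigenvectorBasis i)) = 1 := by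
  have h := orthonormal_iff_ite.mp hA.eigenvectorBasis.orthonormal i i
  rw [if_pos rfl] at h
  simpa only [EuclideanSpace.inner_eq_star_dotProduct, star_trivial] using h

end aux

/-- Let `M` be symmetric stochastic with all diagonal entries `≥ 1/2`, `H`
symmetric with `ξI ≤ H ≤ LI` where `0 < ξ ≤ L`, and `0 < α < 1/(2L)`. Then
`ρ(M − αH) = λmax(M − αH)` and `ρ(M − αH) ≤ 1 − αξ < 1`. -/
theorem specRad_stochastic_sub_smul_hessian
    {n : ℕ} (hn : 0 < n) (M H : Matrix (Fin n) (Fin n) ℝ)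
    (hM : M.IsHermitian) (hMnonneg : ∀ i j, 0 ≤ M i j) (hMrow : ∀ i, ∑ j, M i j = 1)
    (hMdiag : ∀ i, (1 : ℝ) / 2 ≤ M i i)
    (hH : H.IsHermitian)
    (ξ L : ℝ) (hξ : 0 < ξ) (hξL : ξ ≤ L)
    (hHbound : ∀ v : Fin n → ℝ,
      ξ * (v ⬝ᵥ v) ≤ v ⬝ᵥ H.mulVec v ∧ v ⬝ᵥ H.mulVec v ≤ L * (v ⬝ᵥ v))
    (α : ℝ) (hα : 0 < α) (hα2 : α < 1 / (2 * L))
    (hMH : (M - α • H).IsHermitian) :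
    specRad hMH = eigMax hMH ∧ specRad hMH ≤ 1 - α * ξ ∧ 1 - α * ξ < 1 := by
  haveI : Nonempty (Fin n) := Fin.pos_iff_nonempty.mp hn
  have hL : 0 < L := lt_of_lt_of_le hξ hξL
  have hαL : α * L < 1 / 2 := by
    have := (lt_div_iff₀ (by positivity : (0:ℝ) < 2 * L)).mp hα2
    nlinarith
  -- basic symmetry facts about M
  have hsym : ∀ i j, M j i = M i j := fun i j => by
    simpa [Matrix.conjTranspose_apply] using (congrFun (congrFun hM j) i).symm
  have hcol : ∀ j, ∑ i, M i j = 1 := fun j => by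
    simpa [fun i => hsym j i] using hMrow j
  -- quadratic form of M is between 0 and ‖v‖²
  have hquadM : ∀ v : Fin n → ℝ,
      0 ≤ v ⬝ᵥ M.mulVec v ∧ v ⬝ᵥ M.mulVec v ≤ v ⬝ᵥ v := by
    intro v
    have hquad : v ⬝ᵥ M.mulVec v = ∑ i, ∑ j, v i * (M i j * v j) := by
      simp [dotProduct, mulVec, Finset.mul_sum]
    have h1 : ∑ i, ∑ j, M i j * v i ^ 2 = v ⬝ᵥ v := by
      simp [← Finset.sum_mul, hMrow, dotProduct, sq]
    have h2 : ∑ i, ∑ j, M i j * v j ^ 2 = v ⬝ᵥ v := by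
      rw [Finset.sum_comm]
      simp [← Finset.sum_mul, hcol, dotProduct, sq]
    constructor
    · -- 0 ≤ quad, using the diagonal condition
      have hrow_ge : ∀ i, M i i * (v i + v i)^2 ≤ ∑ j, M i j * (v i + v j)^2 := fun i =>
        Finset.single_le_sum (f := fun j => M i j * (v i + v j)^2)
          (fun j _ => mul_nonneg (hMnonneg i j) (sq_nonneg _)) (Finset.mem_univ i)
      have hdiag_ge : 2 * (v ⬝ᵥ v) ≤ ∑ i, M i i * (v i + v i)^2 := by
        have hterm : ∀ i, 2 * (v i * v i) ≤ M i i * (v i + v i)^2 := fun i => by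
          nlinarith [hMdiag i, sq_nonneg (v i)]
        calc 2 * (v ⬝ᵥ v) = ∑ i, 2 * (v i * v i) := by
              simp [dotProduct, Finset.mul_sum]
          _ ≤ _ := Finset.sum_le_sum fun i _ => hterm i
      have expand : ∑ i, ∑ j, M i j * (v i + v j)^2
          = 2*(v ⬝ᵥ v) + 2*(v ⬝ᵥ M.mulVec v) := by
        have e1 : ∀ i j, M i j * (v i + v j)^2
            = (M i j * v i^2 + M i j * v j^2) + 2*(v i * (M i j * v j)) := fun i j => by ring
        simp only [e1, Finset.sum_add_distrib, ← Finset.mul_sum]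
        rw [h1, h2, hquad]
        simp [Finset.mul_sum, mul_assoc]
        ring
      have hfin : 2 * (v ⬝ᵥ v) ≤ 2*(v ⬝ᵥ v) + 2*(v ⬝ᵥ M.mulVec v) := by
        calc 2 * (v ⬝ᵥ v) ≤ ∑ i, M i i * (v i + v i)^2 := hdiag_ge
          _ ≤ ∑ i, ∑ j, M i j * (v i + v j)^2 := Finset.sum_le_sum fun i _ => hrow_ge i
          _ = _ := expand
      linarith
    · -- quad ≤ ‖v‖²
      have key : (0:ℝ) ≤ ∑ i, ∑ j, M i j * (v i - v j)^2 :=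
        Finset.sum_nonneg fun i _ => Finset.sum_nonneg fun j _ =>
          mul_nonneg (hMnonneg i j) (sq_nonneg _)
      have expand : ∑ i, ∑ j, M i j * (v i - v j)^2
          = 2*(v ⬝ᵥ v) - 2*(v ⬝ᵥ M.mulVec v) := by
        have e1 : ∀ i j, M i j * (v i - v j)^2
            = (M i j * v i^2 + M i j * v j^2) - 2*(v i * (M i j * v j)) := fun i j => by ring
        simp only [e1, Finset.sum_sub_distrib, Finset.sum_add_distrib, ← Finset.mul_sum]
        rw [h1, h2, hquad]
        simp [Finset.mul_sum, mul_assoc]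
        ring
      linarith [expand ▸ key]
  -- quadratic form of A = M - α•H
  have hAq : ∀ v : Fin n → ℝ,
      v ⬝ᵥ (M - α • H).mulVec v = v ⬝ᵥ M.mulVec v - α * (v ⬝ᵥ H.mulVec v) := by
    intro v
    simp [sub_mulVec, dotProduct_sub, smul_mulVec, dotProduct_smul, smul_eq_mul]
  have hAq_lo : ∀ v : Fin n → ℝ,
      -(α * L) * (v ⬝ᵥ v) ≤ v ⬝ᵥ (M - α • H).mulVec v := by
    intro v
    rw [hAq v]
    nlinarith [(hquadM v).1, (hHbound v).2, hα.le]
  have hAq_hi : ∀ v : Fin n → ℝ,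
      v ⬝ᵥ (M - α • H).mulVec v ≤ (1 - α * ξ) * (v ⬝ᵥ v) := by
    intro v
    rw [hAq v]
    nlinarith [(hquadM v).2, (hHbound v).1, hα.le]
  set μ := hMH.eigenvalues with hμ
  have heig : ∀ i, μ i = (⇑(hMH.eigenvectorBasis i)) ⬝ᵥ
      (M - α • H).mulVec (⇑(hMH.eigenvectorBasis i)) := fun i => by
    simpa using hMH.eigenvalues_eq i
  have hμ_hi : ∀ i, μ i ≤ 1 - α * ξ := fun i => by
    have := hAq_hi (⇑(hMH.eigenvectorBasis i))
    rw [← heig i, aux_unit hMH i] at this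
    simpa using this
  have hμ_lo : ∀ i, -(α * L) ≤ μ i := fun i => by
    have := hAq_lo (⇑(hMH.eigenvectorBasis i))
    rw [← heig i, aux_unit hMH i] at this
    simpa using this
  have hbdd : BddAbove (Set.range μ) := (Set.finite_range μ).bddAbove
  have hbdd' : BddAbove (Set.range fun i => |μ i|) := (Set.finite_range _).bddAbove
  have hle_max : ∀ i, μ i ≤ eigMax hMH := fun i => le_ciSup hbdd i
  -- eigMax ≥ 1 - αL via the all-ones vector
  have hmax_lo : 1 - α * L ≤ eigMax hMH := by
    set u : Fin n → ℝ := fun _ => 1 with hu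
    have huu : u ⬝ᵥ u = (n : ℝ) := by simp [hu, dotProduct]
    have huMu : u ⬝ᵥ M.mulVec u = (n : ℝ) := by
      simp [hu, dotProduct, mulVec, hMrow]
    have h1 : (1 - α * L) * (n : ℝ) ≤ u ⬝ᵥ (M - α • H).mulVec u := by
      rw [hAq u, huMu]
      nlinarith [(hHbound u).2, hα.le, huu]
    have h2 : u ⬝ᵥ (M - α • H).mulVec u ≤ eigMax hMH * (n : ℝ) := by
      rw [aux_quad_eigen (M - α • H) hMH u]
      calc ∑ i, μ i * (u ⬝ᵥ ⇑(hMH.eigenvectorBasis i))^2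
          ≤ ∑ i, eigMax hMH * (u ⬝ᵥ ⇑(hMH.eigenvectorBasis i))^2 :=
            Finset.sum_le_sum fun i _ =>
              mul_le_mul_of_nonneg_right (hle_max i) (sq_nonneg _)
        _ = eigMax hMH * (u ⬝ᵥ u) := by
            rw [← Finset.mul_sum, ← aux_parseval hMH u]
        _ = eigMax hMH * (n : ℝ) := by rw [huu]
    have hnpos : (0:ℝ) < (n : ℝ) := by exact_mod_cast hn
    have := le_trans h1 h2
    exact le_of_mul_le_mul_right (by linarith) hnpos
  have hαL_lt : α * L < 1 - α * L := by linarith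
  have habs : ∀ i, |μ i| ≤ eigMax hMH := fun i => by
    rcases le_or_gt 0 (μ i) with h | h
    · rw [abs_of_nonneg h]; exact hle_max i
    · rw [abs_of_neg h]
      have := hμ_lo i
      linarith
  have hspec : specRad hMH = eigMax hMH := by
    apply le_antisymm
    · exact ciSup_le habs
    · exact ciSup_mono hbdd' fun i => le_abs_self (μ i)
  refine ⟨hspec, ?_, ?_⟩
  · rw [hspec]
    exact ciSup_le hμ_hi
  · nlinarith
end

section
/- Let f₁, …, f_N : ℝ^d → ℝ be twice continuously differentiable, let θ_i* satisfy ∇f_i(θ_i*) = 0, and write 𝛉* = (θ₁*, …, θ_N*) ∈ ℝ^{dN}. Let ℳ ∈ ℝ^{dN×dN} be a symmetric block matrix whose (i,j) block M_{ij} is a d×d diagonal matrix, and consider one step of multi-task gradient descent: θ_i⁺ = Σ_{j=1}^N M_{ij} θ_j − α∇f_i(θ_i), with 𝛉 = (θ₁,…,θ_N) and 𝛉⁺ = (θ₁⁺,…,θ_N⁺). Let H = diag(H₁, …, H_N) ∈ ℝ^{dN×dN} be the block-diagonal matrix with H_i = ∫₀¹ ∇²f_i(θ_i* + μ(θ_i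 − θ_i*)) dμ. Then 𝛉⁺ − 𝛉* = (ℳ − αH)(𝛉 − 𝛉*) + (ℳ − I_{dN})𝛉*, and consequently ‖𝛉⁺ − 𝛉*‖ ≤ ρ(ℳ − αH)·‖𝛉 − 𝛉*‖ + ‖(ℳ − I_{dN})𝛉*‖, where ‖·‖ is the Euclidean norm. -/
/-- The block operator on `(ℝ^d)^N` (with the Euclidean/ℓ² norm on the concatenation)
determined by an `N × N` array of operators on `ℝ^d`: the `i`-th block of the output is
`∑ j, T i j (x j)`. -/
noncomputable def blockOp {N d : ℕ}
    (T : Fin N → Fin N → (EuclideanSpace ℝ (Fin d) →L[ℝ] EuclideanSpace ℝ (Fin d))) :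
    PiLp 2 (fun _ : Fin N => EuclideanSpace ℝ (Fin d)) →L[ℝ]
      PiLp 2 (fun _ : Fin N => EuclideanSpace ℝ (Fin d)) :=
  letI : ContinuousSMul ℝ (PiLp 2 (fun _ : Fin N => EuclideanSpace ℝ (Fin d))) := inferInstance
  LinearMap.toContinuousLinearMap <|
    ((WithLp.linearEquiv 2 ℝ (∀ _ : Fin N, EuclideanSpace ℝ (Fin d))).symm.toLinearMap.comp
      ((LinearMap.pi fun i => ∑ j, (T i j).toLinearMap.comp (LinearMap.proj j)).comp
        (WithLp.linearEquiv 2 ℝ (∀ _ : Fin N, EuclideanSpace ℝ (Fin d))).toLinearMap))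

/-- The averaged Hessian of `g` along the segment from `a` to `b`,
`∫₀¹ ∇²g(a + μ(b − a)) dμ`, as a continuous linear map. -/
noncomputable def avgHess {d : ℕ} (g : EuclideanSpace ℝ (Fin d) → ℝ)
    (a b : EuclideanSpace ℝ (Fin d)) :
    EuclideanSpace ℝ (Fin d) →L[ℝ] EuclideanSpace ℝ (Fin d) :=
  ∫ μ in (0:ℝ)..1, fderiv ℝ (gradient g) (a + μ • (b - a))

lemma blockOp_apply' {N d : ℕ}
    (T : Fin N → Fin N → (EuclideanSpace ℝ (Fin d) →L[ℝ] EuclideanSpace ℝ (Fin d)))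
    (x : PiLp 2 (fun _ : Fin N => EuclideanSpace ℝ (Fin d))) (i : Fin N) :
    blockOp T x i = ∑ j, T i j (x j) := by
  simp [blockOp, LinearMap.pi_apply]

lemma sum_ite_clm {N d : ℕ} (i : Fin N)
    (A : EuclideanSpace ℝ (Fin d) →L[ℝ] EuclideanSpace ℝ (Fin d))
    (v : Fin N → EuclideanSpace ℝ (Fin d)) :
    ∑ x, (if i = x then A else 0) (v x) = A (v i) := by
  have h : ∀ x, (if i = x then A else 0) (v x) = if i = x then A (v x) else 0 := by
    intro x; split <;> simp
  simp [h]

lemma grad_sub_eq' {d : ℕ} (g : EuclideanSpace ℝ (Fin d) → ℝ) (hg : ContDiff ℝ 2 g)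
    (a b : EuclideanSpace ℝ (Fin d)) :
    gradient g b - gradient g a = avgHess g a b (b - a) := by
  have hgrad : ContDiff ℝ 1 (gradient g) := by
    have : gradient g = fun x => (InnerProductSpace.toDual ℝ _).symm (fderiv ℝ g x) := rfl
    rw [this]
    exact (InnerProductSpace.toDual ℝ _).symm.contDiff.comp (hg.fderiv_right (by norm_num))
  have hcont : Continuous (fderiv ℝ (gradient g)) := hgrad.continuous_fderiv one_ne_zero
  have hline : Continuous fun μ : ℝ => a + μ • (b - a) := by continuity
  have hφ : ∀ μ ∈ Set.uIcc (0:ℝ) 1, HasDerivAt (fun μ : ℝ => gradient g (a + μ • (b - a)))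
      ((fderiv ℝ (gradient g) (a + μ • (b - a))) (b - a)) μ := by
    intro μ _
    have hψ : HasDerivAt (fun μ : ℝ => a + μ • (b - a)) (b - a) μ := by
      simpa using ((hasDerivAt_id μ).smul_const (b - a)).const_add a
    exact ((hgrad.differentiable one_ne_zero (a + μ • (b - a))).hasFDerivAt).comp_hasDerivAt μ hψ
  have hint : IntervalIntegrable (fun μ : ℝ => (fderiv ℝ (gradient g) (a + μ • (b - a))) (b - a))
      MeasureTheory.volume 0 1 := (Continuous.intervalIntegrable (by fun_prop) 0 1)
  have hintφ : IntervalIntegrable (fun μ : ℝ => fderiv ℝ (gradient g) (a + μ • (b - a)))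
      MeasureTheory.volume 0 1 := ((hcont.comp hline).intervalIntegrable 0 1)
  rw [avgHess, ContinuousLinearMap.intervalIntegral_apply hintφ,
    intervalIntegral.integral_eq_sub_of_hasDerivAt hφ hint]
  simp

/-- One step of multi-task gradient descent
`θᵢ⁺ = ∑ⱼ Mᵢⱼ θⱼ − α∇fᵢ(θᵢ)` (with `ℳ` a symmetric block matrix with `d × d` diagonal
blocks `Mᵢⱼ`) satisfies `𝛉⁺ − 𝛉* = (ℳ − αH)(𝛉 − 𝛉*) + (ℳ − I)𝛉*`, where
`H = diag(H₁, …, H_N)` with `Hᵢ = ∫₀¹ ∇²fᵢ(θᵢ* + μ(θᵢ − θᵢ*)) dμ`, and consequently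
`‖𝛉⁺ − 𝛉*‖ ≤ ρ(ℳ − αH)·‖𝛉 − 𝛉*‖ + ‖(ℳ − I)𝛉*‖` (for the symmetric matrix `ℳ − αH`
the spectral radius `ρ` equals the operator norm). -/
theorem multitask_gd_one_step_bound {d N : ℕ}
    (f : Fin N → EuclideanSpace ℝ (Fin d) → ℝ) (hf : ∀ i, ContDiff ℝ 2 (f i))
    (θstar : PiLp 2 fun _ : Fin N => EuclideanSpace ℝ (Fin d))
    (hstar : ∀ i, gradient (f i) (θstar i) = 0)
    (M : Fin N → Fin N → Matrix (Fin d) (Fin d) ℝ)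
    (hMdiag : ∀ i j, (M i j).IsDiag)
    (hMsymm : ∀ i j, M i j = M j i)
    (α : ℝ)
    (θ θplus : PiLp 2 fun _ : Fin N => EuclideanSpace ℝ (Fin d))
    (hupdate : ∀ i, θplus i =
      (∑ j, Matrix.toEuclideanCLM (𝕜 := ℝ) (M i j) (θ j)) - α • gradient (f i) (θ i))
    (ℳop Hop : (PiLp 2 fun _ : Fin N => EuclideanSpace ℝ (Fin d)) →L[ℝ]
      (PiLp 2 fun _ : Fin N => EuclideanSpace ℝ (Fin d)))
    (hℳop : ℳop = blockOp fun i j => Matrix.toEuclideanCLM (𝕜 := ℝ) (M i j))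
    (hHop : Hop = blockOp fun i j =>
      if i = j then avgHess (f i) (θstar i) (θ i) else 0) :
    θplus - θstar =
        (ℳop - α • Hop) (θ - θstar) + (ℳop - ContinuousLinearMap.id ℝ (PiLp 2 fun _ : Fin N => EuclideanSpace ℝ (Fin d))) θstar ∧
    ‖θplus - θstar‖ ≤
        ‖ℳop - α • Hop‖ * ‖θ - θstar‖ + ‖(ℳop - ContinuousLinearMap.id ℝ (PiLp 2 fun _ : Fin N => EuclideanSpace ℝ (Fin d))) θstar‖ := by
  have key : ∀ i, gradient (f i) (θ i) = avgHess (f i) (θstar i) (θ i) (θ i - θstar i) := by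
    intro i
    have h := grad_sub_eq' (f i) (hf i) (θstar i) (θ i)
    rw [hstar i, sub_zero] at h
    exact h
  have main : θplus - θstar =
      (ℳop - α • Hop) (θ - θstar) + (ℳop - ContinuousLinearMap.id ℝ
        (PiLp 2 fun _ : Fin N => EuclideanSpace ℝ (Fin d))) θstar := by
    subst hℳop hHop
    refine PiLp.ext fun i => ?_
    simp only [PiLp.sub_apply, PiLp.add_apply, ContinuousLinearMap.sub_apply,
      ContinuousLinearMap.smul_apply, ContinuousLinearMap.add_apply,
      ContinuousLinearMap.id_apply, PiLp.smul_apply, blockOp_apply']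
    rw [hupdate i, key i]
    simp only [PiLp.sub_apply, apply_ite
      (fun (T : EuclideanSpace ℝ (Fin d) →L[ℝ] EuclideanSpace ℝ (Fin d)) => T (θ i - θstar i)),
      ContinuousLinearMap.zero_apply, Finset.sum_ite_eq, Finset.mem_univ, if_true, map_sub,
      Finset.sum_sub_distrib, sum_ite_clm]
    abel
  refine ⟨main, ?_⟩
  rw [main]
  refine (norm_add_le _ _).trans ?_
  gcongr
  exact ContinuousLinearMap.le_opNorm _ _
end
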